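/- Let G be a graph, u ∈ V(G), and A ⊆ V(G − u). Suppose there exist k independent paths in G from u to distinct vertices a_1, …, a_k ∈ A, respectively, each otherwise disjoint from A (i.e., meeting A only in its endpoint in A). Then for any n ≥ k, if there exist n independent paths P_1, …, P_n in G from u to n distinct vertices of A, each otherwise disjoint from A, then P_1, …, P_n may be chosen so that a_i ∈ V(P_i) for all i ∈ [k]. -/

import Mathlib

open SimpleGraph

section CommonDefs

variable {V : Type*}

/-- The spanning subgraph of `G` keeping only edges with both ends in `W`
(vertices outside `W` become isolated). Walks in `gOn G W` between vertices of `W`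
are exactly walks in the subgraph of `G` induced by `W`. -/
def gOn (G : SimpleGraph V) (W : Set V) : SimpleGraph V where
  Adj u v := G.Adj u v ∧ u ∈ W ∧ v ∈ W
  symm := ⟨fun _ _ h => ⟨h.1.symm, h.2.2, h.2.1⟩⟩
  loopless := ⟨fun u h => h.1.ne rfl⟩

/-- `G` is `k`-connected: more than `k` vertices, and deleting fewer than `k`
vertices leaves a connected graph. -/
def KConnected (k : ℕ) (G : SimpleGraph V) : Prop :=
  k < Nat.card V ∧ ∀ S : Set V, S.ncard < k → (G.induce Sᶜ).Connected

/-- A drawing (embedding) of the graph `G` inside the region `D ⊆ ℝ²` with no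
crossing edges: vertices are distinct points of `D`, every edge is an injective
arc in `D` between the images of its ends, arcs do not pass through images of
other vertices, and two arcs of distinct edges meet only in images of common
endvertices. -/
def GoodDrawing (G : SimpleGraph V) (D : Set (ℝ × ℝ)) (f : V → ℝ × ℝ) : Prop :=
  Function.Injective f ∧ (∀ v, f v ∈ D) ∧
  ∃ γ : ∀ u v : V, G.Adj u v → _root_.Path (f u) (f v),
    (∀ u v (h : G.Adj u v), Function.Injective fun t => (γ u v h) t) ∧
    (∀ u v (h : G.Adj u v) (t : unitInterval), (γ u v h) t ∈ D) ∧
    (∀ u v (h : G.Adj u v),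
      (Set.range fun t => (γ v u h.symm) t) = Set.range fun t => (γ u v h) t) ∧
    (∀ u v (h : G.Adj u v) (w : V), w ≠ u → w ≠ v →
      f w ∉ Set.range fun t => (γ u v h) t) ∧
    (∀ u v u' v' (h : G.Adj u v) (h' : G.Adj u' v'), s(u, v) ≠ s(u', v') →
      ∀ x : ℝ × ℝ, (x ∈ Set.range fun t => (γ u v h) t) →
        (x ∈ Set.range fun t => (γ u' v' h') t) →
          ∃ w : V, (w = u ∨ w = v) ∧ (w = u' ∨ w = v') ∧ x = f w)

/-- `G` is a planar graph: it can be drawn in the plane with no crossing edges. -/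
def PlanarGraph (G : SimpleGraph V) : Prop := ∃ f, GoodDrawing G Set.univ f

/-- The closed unit disc in the plane. -/
def unitDisc : Set (ℝ × ℝ) := {p | p.1 ^ 2 + p.2 ^ 2 ≤ 1}

/-- The boundary circle of the closed unit disc. -/
def unitCircleSet : Set (ℝ × ℝ) := {p | p.1 ^ 2 + p.2 ^ 2 = 1}

/-- The point of the unit circle with angle `θ`. -/
noncomputable def circlePt (θ : ℝ) : ℝ × ℝ := (Real.cos θ, Real.sin θ)

/-- `(G, A)` is planar: `G` can be drawn in a closed disc with no crossing edges
so that all the vertices of `A` lie on the boundary of the disc (equivalently,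
`G` has a planar drawing with `A` on the unbounded face). -/
def PlanarInDiscWithBoundary (G : SimpleGraph V) (A : Set V) : Prop :=
  ∃ f, GoodDrawing G unitDisc f ∧ ∀ v ∈ A, f v ∈ unitCircleSet

/-- `(G, b 0, …, b (n-1))` is planar: `G` can be drawn in a closed disc with no
crossing edges so that `b 0, …, b (n-1)` occur on the boundary of the disc in
this cyclic order. -/
def PlanarCyclic {n : ℕ} (G : SimpleGraph V) (b : Fin n → V) : Prop :=
  ∃ f, GoodDrawing G unitDisc f ∧
    ∃ θ : Fin n → ℝ, StrictMono θ ∧ (∀ i j, θ i < θ j + 2 * Real.pi) ∧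
      ∀ i, f (b i) = circlePt (θ i)

/-- `b 0, …, b 4` are the branch vertices of a `TK₅` (a subdivision of `K₅`)
contained in `G`: between any two branch vertices there is a path, the paths are
pairwise internally disjoint, and no branch vertex is internal on any path. -/
def IsTK5With (G : SimpleGraph V) (b : Fin 5 → V) : Prop :=
  Function.Injective b ∧
  ∃ P : ∀ i j : Fin 5, G.Walk (b i) (b j),
    (∀ i j : Fin 5, i < j → (P i j).IsPath) ∧
    (∀ i j : Fin 5, i < j → ∀ k : Fin 5, b k ∈ (P i j).support → k = i ∨ k = j) ∧
    (∀ i j i' j' : Fin 5, i < j → i' < j' → (i, j) ≠ (i', j') →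
      ∀ v : V, v ∈ (P i j).support → v ∈ (P i' j').support →
        (v = b i ∨ v = b j) ∧ (v = b i' ∨ v = b j'))

/-- `G` contains a subdivision of `K₅`. -/
def ContainsTK5 (G : SimpleGraph V) : Prop := ∃ b, IsTK5With G b

/-- `G` contains a subdivision of `K₅` in which `y` is not a branch vertex. -/
def ContainsTK5Avoiding (G : SimpleGraph V) (y : V) : Prop :=
  ∃ b, IsTK5With G b ∧ ∀ i, b i ≠ y

/-- `G` contains `K₄⁻` (`K₄` minus an edge) as a subgraph. -/
def ContainsK4minus (G : SimpleGraph V) : Prop :=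
  ∃ a b c d : V, a ≠ b ∧ a ≠ c ∧ a ≠ d ∧ b ≠ c ∧ b ≠ d ∧ c ≠ d ∧
    G.Adj a b ∧ G.Adj a c ∧ G.Adj a d ∧ G.Adj b c ∧ G.Adj b d

/-- The induced subgraph of `G` on `{x1, x2, y1, y2}` is isomorphic to `K₄⁻`,
with `y1 y2` the missing edge. -/
def K4minusAt (G : SimpleGraph V) (x1 x2 y1 y2 : V) : Prop :=
  x1 ≠ x2 ∧ x1 ≠ y1 ∧ x1 ≠ y2 ∧ x2 ≠ y1 ∧ x2 ≠ y2 ∧ y1 ≠ y2 ∧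
  G.Adj x1 x2 ∧ G.Adj x1 y1 ∧ G.Adj x1 y2 ∧ G.Adj x2 y1 ∧ G.Adj x2 y2 ∧
  ¬ G.Adj y1 y2

/-- `G − {yv : v ∉ S}`: delete from `G` all edges at `y` except those to `S`. -/
def removeEdgesAt (G : SimpleGraph V) (y : V) (S : Set V) : SimpleGraph V :=
  G.deleteEdges {e | ∃ v : V, v ∉ S ∧ e = s(y, v)}

/-- `(G1, G2)` is a `k`-separation of `G`: `G1, G2` are edge-disjoint subgraphs
whose union is `G`, neither vertex set contains the other, and they share
exactly `k` vertices. -/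
def IsSep (G : SimpleGraph V) (k : ℕ) (G1 G2 : G.Subgraph) : Prop :=
  G1 ⊔ G2 = ⊤ ∧ Disjoint G1.edgeSet G2.edgeSet ∧
  (G1.verts \ G2.verts).Nonempty ∧ (G2.verts \ G1.verts).Nonempty ∧
  (G1.verts ∩ G2.verts).ncard = k

/-- `G2` is exactly the graph obtained from the edge-disjoint union of the
8-cycle `a₁b₁a₂b₂a₃b₃a₄b₄a₁` and the 4-cycle `b₁b₂b₃b₄b₁` by adding the vertex
`a` and the edges `a bᵢ` for `i ∈ [4]`. -/
def SpecialG2 (G : SimpleGraph V) (a : V) (G2 : G.Subgraph) (av bv : Fin 4 → V) : Prop :=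
  Function.Injective av ∧ Function.Injective bv ∧ (∀ i j, av i ≠ bv j) ∧
  (∀ i, a ≠ av i) ∧ (∀ i, a ≠ bv i) ∧
  G2.verts = insert a (Set.range av ∪ Set.range bv) ∧
  ∀ u v : V, G2.Adj u v ↔
    ((∃ i : Fin 4, ({u, v} : Set V) = {av i, bv i}) ∨
     (∃ i : Fin 4, ({u, v} : Set V) = {bv i, av (i + 1)}) ∨
     (∃ i : Fin 4, ({u, v} : Set V) = {bv i, bv (i + 1)}) ∨
     (∃ i : Fin 4, ({u, v} : Set V) = {a, bv i}))

/-- `G` has a 5-separation `(G1, G2)` with `V(G1 ∩ G2) = {a, a₁, a₂, a₃, a₄}`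
where `G2` is the special graph of `SpecialG2`. -/
def HasSpecialSep (G : SimpleGraph V) (a : V) : Prop :=
  ∃ (G1 G2 : G.Subgraph) (av bv : Fin 4 → V),
    IsSep G 5 G1 G2 ∧ G1.verts ∩ G2.verts = insert a (Set.range av) ∧
    SpecialG2 G a G2 av bv

/-- `w` is an induced path: a path such that every edge of the ambient graph
between vertices of `w` is an edge of `w`. -/
def IsInducedPath {H : SimpleGraph V} {a b : V} (w : H.Walk a b) : Prop :=
  w.IsPath ∧ ∀ u v : V, u ∈ w.support → v ∈ w.support → H.Adj u v → s(u, v) ∈ w.edges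

/-- The neighbourhood `N(A)` of a set `A` of vertices. -/
def nbhdSet (G : SimpleGraph V) (A : Set V) : Set V :=
  {v | v ∉ A ∧ ∃ a ∈ A, G.Adj v a}

/-- The graph `p(G, 𝒜)` obtained from `G` by deleting each member of `𝒜` and
adding edges joining every pair of distinct vertices in its neighbourhood. -/
def reducedGraph (G : SimpleGraph V) (𝒜 : Set (Set V)) : SimpleGraph V where
  Adj u v := u ≠ v ∧ u ∉ ⋃₀ 𝒜 ∧ v ∉ ⋃₀ 𝒜 ∧
    (G.Adj u v ∨ ∃ A ∈ 𝒜, u ∈ nbhdSet G A ∧ v ∈ nbhdSet G A)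
  symm := by
    constructor
    rintro u v ⟨h1, h2, h3, h4⟩
    refine ⟨h1.symm, h3, h2, ?_⟩
    rcases h4 with h | ⟨A, hA, hu, hv⟩
    · exact Or.inl h.symm
    · exact Or.inr ⟨A, hA, hv, hu⟩
  loopless := ⟨fun _ h => h.1 rfl⟩

/-- `(G, 𝒜, b 0, …, b (n-1))` is 3-planar. -/
def IsThreePlanar {n : ℕ} (G : SimpleGraph V) (𝒜 : Set (Set V)) (b : Fin n → V) : Prop :=
  (∀ A ∈ 𝒜, ∀ B ∈ 𝒜, A ≠ B → Disjoint A B) ∧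
  (∀ A ∈ 𝒜, ∀ B ∈ 𝒜, A ≠ B → ∀ v ∈ nbhdSet G A, v ∉ B) ∧
  (∀ A ∈ 𝒜, (nbhdSet G A).Finite ∧ (nbhdSet G A).ncard ≤ 3) ∧
  (∀ i, ∀ A ∈ 𝒜, b i ∉ A) ∧
  PlanarCyclic (reducedGraph G 𝒜) b

/-- `S` is a cut of `G`: deleting `S` disconnects `G`. -/
def IsVertexCut (G : SimpleGraph V) (S : Set V) : Prop :=
  ∃ u ∈ Sᶜ, ∃ v ∈ Sᶜ, ¬ (gOn G Sᶜ).Reachable u v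

/-- `D` is a union of components of `G − S`. -/
def UnionOfComps (G : SimpleGraph V) (S : Set V) (D : Set V) : Prop :=
  D ⊆ Sᶜ ∧ ∀ u ∈ D, ∀ v ∈ Sᶜ, (gOn G Sᶜ).Reachable u v → v ∈ D

/-- `G` is `(k, A)`-connected: for any cut `T` of `G` with `|T| < k`, every
component of `G − T` contains a vertex of `A`. -/
def IsKAConnected (G : SimpleGraph V) (k : ℕ) (A : Set V) : Prop :=
  ∀ T : Set V, T.ncard < k → IsVertexCut G T →
    ∀ v ∈ Tᶜ, ∃ a ∈ A, a ∈ Tᶜ ∧ (gOn G Tᶜ).Reachable v a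

/-- Any two vertices of `B` are joined by a walk of `G` inside `B`. -/
def PreconnOn (G : SimpleGraph V) (B : Set V) : Prop :=
  ∀ u ∈ B, ∀ v ∈ B, (gOn G B).Reachable u v

/-- The subgraph of `G` induced by `B` is connected. -/
def ConnOn (G : SimpleGraph V) (B : Set V) : Prop := B.Nonempty ∧ PreconnOn G B

/-- The subgraph of `G` induced by `B` has no cut vertex. -/
def NoCutVertexOn (G : SimpleGraph V) (B : Set V) : Prop :=
  ∀ v ∈ B, PreconnOn G (B \ {v})

/-- `B` is (the vertex set of) a block of the subgraph of `G` induced by `W`: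
a maximal set inducing a connected subgraph with no cut vertex. -/
def IsBlockOf (G : SimpleGraph V) (W : Set V) (B : Set V) : Prop :=
  B ⊆ W ∧ ConnOn G B ∧ NoCutVertexOn G B ∧
  ∀ B' : Set V, B ⊆ B' → B' ⊆ W → ConnOn G B' → NoCutVertexOn G B' → B' = B

/-- `C` is a chain of blocks of the subgraph of `G` induced by `W`, from `u` to
`v` (identified with its union, a subgraph of `G`). -/
def IsChainOfBlocks (G : SimpleGraph V) (W : Set V) (u v : V) (C : G.Subgraph) : Prop :=
  ∃ (k : ℕ) (Bs : ℕ → Set V),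
    (∀ i ≤ k, IsBlockOf G W (Bs i)) ∧
    C = ⨆ i ∈ Set.Iic k, (⊤ : G.Subgraph).induce (Bs i) ∧
    ((k = 0 ∧ u ∈ Bs 0 ∧ v ∈ Bs 0 ∧ u ≠ v) ∨
     (1 ≤ k ∧ u ∈ Bs 0 \ Bs 1 ∧ v ∈ Bs k \ Bs (k - 1) ∧
       (∀ i < k, (Bs i ∩ Bs (i + 1)).ncard = 1) ∧
       (∀ i j : ℕ, i + 2 ≤ j → j ≤ k → Bs i ∩ Bs j = ∅)))

/-- Two paths are independent: no internal vertex of either lies on the other. -/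
def IndepPair {H : SimpleGraph V} {a b c d : V} (P : H.Walk a b) (Q : H.Walk c d) : Prop :=
  (∀ v ∈ P.support, v ≠ a → v ≠ b → v ∉ Q.support) ∧
  (∀ v ∈ Q.support, v ≠ c → v ≠ d → v ∉ P.support)

end CommonDefs

section PerfectAux

variable {V : Type*}

lemma mem_tail_of_ne_head {G : SimpleGraph V} {x b v : V} (q : G.Walk x b)
    (hv : v ∈ q.support) (hne : v ≠ x) : v ∈ q.support.tail := by
  rw [q.support_eq_cons, List.mem_cons] at hv
  exact hv.resolve_left hne

/-- In a path split as an append, a vertex in both halves is the splitting vertex. -/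
lemma mem_both_append_eq {G : SimpleGraph V} {a x b : V} {p : G.Walk a x} {q : G.Walk x b}
    (h : (p.append q).IsPath) {v : V} (hvp : v ∈ p.support) (hvq : v ∈ q.support) : v = x := by
  have hnd := h.support_nodup
  rw [SimpleGraph.Walk.support_append, List.nodup_append] at hnd
  by_contra hne
  exact hnd.2.2 v hvp v (mem_tail_of_ne_head q hvq hne) rfl

/-- first vertex of a walk lying in S -/
lemma exists_first_mem {G : SimpleGraph V} {a b : V} (w : G.Walk a b) (S : Set V) (hb : b ∈ S) :
    ∃ x, x ∈ S ∧ ∃ (w1 : G.Walk a x) (w2 : G.Walk x b), w = w1.append w2 ∧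
      ∀ v ∈ w1.support, v ≠ x → v ∉ S := by
  induction w with
  | nil =>
    exact ⟨_, hb, Walk.nil, Walk.nil, rfl, by simp⟩
  | @cons c d e h p ih =>
    by_cases hc : c ∈ S
    · refine ⟨c, hc, Walk.nil, Walk.cons h p, rfl, by simp⟩
    · obtain ⟨x, hx, w1, w2, hEq, hw1⟩ := ih hb
      refine ⟨x, hx, Walk.cons h w1, w2, by rw [Walk.cons_append, hEq], ?_⟩
      intro v hv hvx
      rw [Walk.support_cons, List.mem_cons] at hv
      rcases hv with rfl | hv
      · exact hc
      · exact hw1 v hv hvx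

/-- last vertex of a walk lying in S -/
lemma exists_last_mem {G : SimpleGraph V} {a b : V} (w : G.Walk a b) (S : Set V) (ha : a ∈ S) :
    ∃ x, x ∈ S ∧ ∃ (w1 : G.Walk a x) (w2 : G.Walk x b), w = w1.append w2 ∧
      ∀ v ∈ w2.support, v ≠ x → v ∉ S := by
  obtain ⟨x, hx, r1, r2, hEq, hr1⟩ := exists_first_mem w.reverse S (by simpa using ha)
  refine ⟨x, hx, r2.reverse, r1.reverse, ?_, ?_⟩
  · have := congrArg Walk.reverse hEq
    rw [Walk.reverse_reverse, Walk.reverse_append] at this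
    exact this
  · intro v hv hvx
    rw [Walk.support_reverse] at hv
    exact hr1 v (by simpa using hv) hvx


/-- Walking along fan edges, starting on `P i₀`, avoiding `u` and `a i₀`, stays on `P i₀`. -/
lemma fan_trace {G : SimpleGraph V} {u : V} {k : ℕ} {a : Fin k → V} {P : ∀ i : Fin k, G.Walk u (a i)}
    (hPi : ∀ i j, i ≠ j → ∀ v, v ∈ (P i).support → v ≠ u → v ≠ a i → v ∉ (P j).support)
    (i₀ : Fin k) :
    ∀ {x c : V} (w : G.Walk x c), (∀ d ∈ w.edges, ∃ i, d ∈ (P i).edges) →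
      x ∈ (P i₀).support → (∀ v ∈ w.support, v ≠ u ∧ v ≠ a i₀) →
      c ∈ (P i₀).support := by
  intro x c w
  induction w with
  | nil => exact fun _ hx _ => hx
  | @cons s t e h p ih =>
    intro hE hx hsup
    obtain ⟨i', hi'⟩ := hE s(s, t) (by rw [Walk.edges_cons]; exact List.mem_cons_self)
    have hxcond := hsup s (Walk.start_mem_support _)
    have hii : i' = i₀ := by
      by_contra hne
      exact hPi i₀ i' (fun hcc => hne hcc.symm) s hx hxcond.1 hxcond.2
        ((P i').fst_mem_support_of_mem_edges hi')
    subst hii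
    have ht : t ∈ (P i').support := (P i').snd_mem_support_of_mem_edges hi'
    exact ih (fun d hd => hE d (by rw [Walk.edges_cons]; exact List.mem_cons_of_mem _ hd)) ht
      (fun v hv => hsup v (by rw [Walk.support_cons]; exact List.mem_cons_of_mem _ hv))

/-- Extend an injection given on an initial segment to a permutation. -/
lemma exists_perm_extend {k n : ℕ} (hkn : k ≤ n) (τ : Fin k → Fin n) (hτ : Function.Injective τ) :
    ∃ σ : Equiv.Perm (Fin n), ∀ i : Fin k, σ (Fin.castLE hkn i) = τ i := by
  classical
  set f : Fin n → Fin n := fun x => if h : (x : ℕ) < k then τ ⟨x, h⟩ else x with hf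
  have hfs : Set.InjOn f ↑(Finset.univ.filter (fun x : Fin n => (x : ℕ) < k)) := by
    intro x1 h1 x2 h2 hEq
    simp only [Finset.coe_filter, Set.mem_setOf_eq] at h1 h2
    rw [hf] at hEq
    simp only [dif_pos h1.2, dif_pos h2.2] at hEq
    have h3 := congrArg (Fin.val (n := k)) (hτ hEq)
    exact Fin.ext h3
  have hαt : Fintype.card (Fin n) = (Finset.univ : Finset (Fin n)).card := by simp
  have hfst : Finset.image f (Finset.univ.filter (fun x : Fin n => (x : ℕ) < k)) ⊆ Finset.univ :=
    Finset.subset_univ _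
  obtain ⟨g, hg⟩ := Finset.exists_equiv_extend_of_card_eq hαt hfst hfs
  refine ⟨g.trans (Equiv.subtypeUnivEquiv (fun x => Finset.mem_univ x)), fun i => ?_⟩
  have hmem : Fin.castLE hkn i ∈ Finset.univ.filter (fun x : Fin n => (x : ℕ) < k) := by
    simp only [Finset.mem_filter, Finset.mem_univ, true_and]
    exact i.isLt
  have h1 : ((g.trans (Equiv.subtypeUnivEquiv (fun x => Finset.mem_univ x)))
      (Fin.castLE hkn i) : Fin n) = f (Fin.castLE hkn i) := hg _ hmem
  rw [h1, hf]
  simp only [dif_pos (show ((Fin.castLE hkn i : Fin n) : ℕ) < k from i.isLt)]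
  exact congrArg τ (Fin.ext rfl)


lemma perfect_main {V : Type*} [Fintype V] (G : SimpleGraph V)
    (u : V) (A : Set V) (hu : u ∉ A)
    (k n : ℕ) (hkn : k ≤ n)
    (a : Fin k → V) (hainj : Function.Injective a) (haA : ∀ i, a i ∈ A)
    (P : ∀ i : Fin k, G.Walk u (a i))
    (hPp : ∀ i, (P i).IsPath)
    (hPi : ∀ i j, i ≠ j → ∀ v, v ∈ (P i).support → v ≠ u → v ≠ a i → v ∉ (P j).support)
    (hPA : ∀ i, ∀ v ∈ (P i).support, v ∈ A → v = a i) :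
    ∀ N : ℕ, ∀ (e : Fin n → V) (Q : ∀ i : Fin n, G.Walk u (e i)),
      Function.Injective e → (∀ i, e i ∈ A) → (∀ i, (Q i).IsPath) →
      (∀ i j, i ≠ j → ∀ v, v ∈ (Q i).support → v ≠ u → v ≠ e i → v ∉ (Q j).support) →
      (∀ i, ∀ v ∈ (Q i).support, v ∈ A → v = e i) →
      (k - {i : Fin k | ∃ l, e l = a i}.ncard) * (Fintype.card (Sym2 V) + 1) +
        ((⋃ l, {d | d ∈ (Q l).edges}) \ (⋃ i, {d | d ∈ (P i).edges})).ncard ≤ N →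
      ∃ (e' : Fin n → V) (Q' : ∀ i : Fin n, G.Walk u (e' i)),
        Function.Injective e' ∧ (∀ i, e' i ∈ A) ∧ (∀ i, (Q' i).IsPath) ∧
        (∀ i j, i ≠ j → ∀ v, v ∈ (Q' i).support → v ≠ u → v ≠ e' i → v ∉ (Q' j).support) ∧
        (∀ i, ∀ v ∈ (Q' i).support, v ∈ A → v = e' i) ∧
        (∀ i : Fin k, ∃ l, e' l = a i) := by
  classical
  intro N
  induction N using Nat.strong_induction_on with
  | _ N ih =>
  intro e Q hinj heA hQp hQi hQA hM
  by_cases hall : ∀ i : Fin k, ∃ l, e l = a i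
  · exact ⟨e, Q, hinj, heA, hQp, hQi, hQA, hall⟩
  push_neg at hall
  obtain ⟨i₀, hi₀⟩ := hall
  have hk0 : 0 < k := i₀.pos
  have hn0 : 0 < n := lt_of_lt_of_le hk0 hkn
  set B := Fintype.card (Sym2 V) with hB
  set EP : Set (Sym2 V) := ⋃ i, {d | d ∈ (P i).edges} with hEPdef
  set S : Set V := ⋃ l, {v | v ∈ (Q l).support} with hSdef
  have ha₀S : a i₀ ∉ S := by
    intro hmem
    rw [hSdef, Set.mem_iUnion] at hmem
    obtain ⟨l, hl⟩ := hmem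
    exact hi₀ l (hQA l _ hl (haA i₀)).symm
  have huS : u ∈ S := by
    rw [hSdef, Set.mem_iUnion]
    exact ⟨⟨0, hn0⟩, Walk.start_mem_support _⟩
  obtain ⟨x, hxS, w1, w2, hPeq, hw2last⟩ := exists_last_mem (P i₀) S huS
  have hxP : x ∈ (P i₀).support := by
    rw [hPeq]
    exact (Walk.mem_support_append_iff _ _).mpr (Or.inl (Walk.end_mem_support _))
  have hw2sub : ∀ v ∈ w2.support, v ∈ (P i₀).support := by
    intro v hv; rw [hPeq]; exact (Walk.mem_support_append_iff _ _).mpr (Or.inr hv)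
  have hw2edges : ∀ d ∈ w2.edges, d ∈ (P i₀).edges := by
    intro d hd; rw [hPeq, Walk.edges_append]; exact List.mem_append_right _ hd
  have hw2path : w2.IsPath := by
    have h := hPp i₀; rw [hPeq] at h; exact h.of_append_right
  have hx_ne_a₀ : x ≠ a i₀ := fun h => ha₀S (h ▸ hxS)
  -- choose the path to reroute
  have hjex : ∃ l, x ∈ (Q l).support ∧ (x = u → ∀ i, e l ≠ a i) := by
    by_cases hxu : x = u
    · have hno : ¬ ∀ l, ∃ i, e l = a i := by
        intro hcon
        have hsub : Set.range e ⊆ Set.range a := by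
          rintro v ⟨l, rfl⟩
          obtain ⟨i, hi⟩ := hcon l
          exact ⟨i, hi.symm⟩
        have h1 : (Set.range e).ncard = n := by
          rw [← Set.image_univ, Set.ncard_image_of_injective _ hinj, Set.ncard_univ,
            Nat.card_eq_fintype_card, Fintype.card_fin]
        have h2 : (Set.range a).ncard = k := by
          rw [← Set.image_univ, Set.ncard_image_of_injective _ hainj, Set.ncard_univ,
            Nat.card_eq_fintype_card, Fintype.card_fin]
        have h3 : (Set.range a).ncard ≤ (Set.range e).ncard := by
          rw [h1, h2]; exact hkn
        have h4 : Set.range e = Set.range a :=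
          Set.eq_of_subset_of_ncard_le hsub h3 (Set.toFinite _)
        have h5 : a i₀ ∈ Set.range e := h4.symm ▸ Set.mem_range_self i₀
        obtain ⟨l, hl⟩ := h5
        exact hi₀ l hl
      push_neg at hno
      obtain ⟨l, hl⟩ := hno
      refine ⟨l, ?_, fun _ => hl⟩
      rw [hxu]
      exact Walk.start_mem_support _
    · rw [hSdef, Set.mem_iUnion] at hxS
      obtain ⟨l, hl⟩ := hxS
      exact ⟨l, hl, fun h => absurd h hxu⟩
  obtain ⟨j, hxQj, hjfan⟩ := hjex
  set pre := (Q j).takeUntil x hxQj with hpredef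
  set post := (Q j).dropUntil x hxQj with hpostdef
  have hspec : pre.append post = Q j := (Q j).take_spec hxQj
  have hQjpath' : (pre.append post).IsPath := by rw [hspec]; exact hQp j
  have hprepath : pre.IsPath := (hQp j).takeUntil hxQj
  have hpresub : ∀ v ∈ pre.support, v ∈ (Q j).support :=
    fun v hv => (Q j).support_takeUntil_subset hxQj hv
  have hpostsub : ∀ v ∈ post.support, v ∈ (Q j).support :=
    fun v hv => (Q j).support_dropUntil_subset hxQj hv
  have hx_ne_ej : x ≠ e j := by
    intro h
    have hxA : x ∈ A := by rw [h]; exact heA j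
    exact hx_ne_a₀ (hPA i₀ x hxP hxA)
  have hej_not_pre : e j ∉ pre.support := by
    intro h
    exact hx_ne_ej (mem_both_append_eq hQjpath' h (Walk.end_mem_support post)).symm
  have hu_not_post : x ≠ u → u ∉ post.support := by
    intro hxu h
    exact hxu (mem_both_append_eq hQjpath' (Walk.start_mem_support pre) h).symm
  have hpostS : ∀ v ∈ post.support, v ∈ S :=
    fun v hv => Set.mem_iUnion.mpr ⟨j, hpostsub v hv⟩
  -- the rerouted walk
  set R : G.Walk u (a i₀) := pre.append w2 with hRdef
  have hRsup : ∀ v, v ∈ R.support ↔ (v ∈ pre.support ∨ v ∈ w2.support) := by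
    intro v; rw [hRdef]; exact Walk.mem_support_append_iff _ _
  have hRpath : R.IsPath := by
    apply Walk.IsPath.mk'
    rw [hRdef, Walk.support_append, List.nodup_append]
    refine ⟨hprepath.support_nodup, ?_, ?_⟩
    · have h := hw2path.support_nodup
      rw [w2.support_eq_cons] at h
      exact h.of_cons
    · intro v hv v' hv2 hvv'
      subst hvv'
      have hvx : v ≠ x := by
        intro h
        subst h
        have h2 := hw2path.support_nodup
        rw [w2.support_eq_cons] at h2
        exact (List.nodup_cons.mp h2).1 hv2
      have hvw2 : v ∈ w2.support := by
        rw [w2.support_eq_cons]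
        exact List.mem_cons_of_mem _ hv2
      exact hw2last v hvw2 hvx (Set.mem_iUnion.mpr ⟨j, hpresub v hv⟩)
  -- the new system
  set e' : Fin n → V := fun l => if l = j then a i₀ else e l with he'def
  have he'j : e' j = a i₀ := by rw [he'def]; simp
  have he'ne : ∀ l, l ≠ j → e' l = e l := fun l hl => by rw [he'def]; simp [hl]
  set Q' : ∀ l : Fin n, G.Walk u (e' l) := fun l =>
    if h : l = j then R.copy rfl (by rw [h, he'j]) else (Q l).copy rfl (he'ne l h).symm
    with hQ'def
  have hQ'jsup : (Q' j).support = R.support := by rw [hQ'def]; simp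
  have hQ'jedg : (Q' j).edges = R.edges := by rw [hQ'def]; simp
  have hQ'nsup : ∀ l, l ≠ j → (Q' l).support = (Q l).support := by
    intro l hl; rw [hQ'def]; simp [hl]
  have hQ'nedg : ∀ l, l ≠ j → (Q' l).edges = (Q l).edges := by
    intro l hl; rw [hQ'def]; simp [hl]
  -- the new system is good
  have hinj' : Function.Injective e' := by
    intro l1 l2 h
    by_cases h1 : l1 = j <;> by_cases h2 : l2 = j
    · rw [h1, h2]
    · rw [he'ne l2 h2, h1, he'j] at h; exact absurd h.symm (hi₀ l2)
    · rw [he'ne l1 h1, h2, he'j] at h; exact absurd h (hi₀ l1)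
    · rw [he'ne l1 h1, he'ne l2 h2] at h; exact hinj h
  have heA' : ∀ l, e' l ∈ A := by
    intro l
    by_cases h1 : l = j
    · rw [h1, he'j]; exact haA i₀
    · rw [he'ne l h1]; exact heA l
  have hQp' : ∀ l, (Q' l).IsPath := by
    intro l
    by_cases h1 : l = j
    · subst h1; rw [hQ'def]; simpa using hRpath
    · rw [hQ'def]; simp only [dif_neg h1]; simpa using hQp l
  have hQi' : ∀ l1 l2, l1 ≠ l2 → ∀ v, v ∈ (Q' l1).support → v ≠ u → v ≠ e' l1 →
      v ∉ (Q' l2).support := by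
    intro l1 l2 hne v hv hvu hve
    by_cases h1 : l1 = j
    · subst h1
      rw [hQ'jsup] at hv
      rw [hRsup] at hv
      rw [he'j] at hve
      rw [hQ'nsup l2 (Ne.symm hne)]
      rcases hv with hv | hv
      · have hvej : v ≠ e l1 := fun hc => hej_not_pre (hc ▸ hv)
        exact hQi l1 l2 hne v (hpresub v hv) hvu hvej
      · by_cases hvx : v = x
        · subst hvx
          exact hQi l1 l2 hne v hxQj hvu hx_ne_ej
        · intro hcon
          exact hw2last v hv hvx (Set.mem_iUnion.mpr ⟨l2, hcon⟩)
    · by_cases h2 : l2 = j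
      · subst h2
        rw [hQ'nsup l1 h1] at hv
        rw [he'ne l1 h1] at hve
        have hnotQj : v ∉ (Q l2).support := hQi l1 l2 hne v hv hvu hve
        rw [hQ'jsup]
        intro hcon
        rw [hRsup] at hcon
        rcases hcon with hc | hc
        · exact hnotQj (hpresub v hc)
        · by_cases hvx : v = x
          · exact hnotQj (hvx ▸ hxQj)
          · exact hw2last v hc hvx (Set.mem_iUnion.mpr ⟨l1, hv⟩)
      · rw [hQ'nsup l1 h1] at hv
        rw [he'ne l1 h1] at hve
        rw [hQ'nsup l2 h2]
        exact hQi l1 l2 hne v hv hvu hve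
  have hQA' : ∀ l, ∀ v ∈ (Q' l).support, v ∈ A → v = e' l := by
    intro l v hv hvA
    by_cases h1 : l = j
    · subst h1
      rw [hQ'jsup] at hv
      rw [hRsup] at hv
      rw [he'j]
      rcases hv with hv | hv
      · have h2 := hQA l v (hpresub v hv) hvA
        exact absurd (h2 ▸ hv) hej_not_pre
      · exact hPA i₀ v (hw2sub v hv) hvA
    · rw [hQ'nsup l h1] at hv; rw [he'ne l h1]; exact hQA l v hv hvA
  -- measure bookkeeping
  set hits : Set (Fin k) := {i : Fin k | ∃ l, e l = a i} with hhitsdef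
  set hits' : Set (Fin k) := {i : Fin k | ∃ l, e' l = a i} with hhits'def
  set EQ : Set (Sym2 V) := ⋃ l, {d | d ∈ (Q l).edges} with hEQdef
  set EQ' : Set (Sym2 V) := ⋃ l, {d | d ∈ (Q' l).edges} with hEQ'def
  have hi₀hits : i₀ ∉ hits := fun hmem => by
    obtain ⟨l, hl⟩ := hmem
    exact hi₀ l hl
  have hhitsk : hits.ncard < k := by
    have hne : hits ≠ Set.univ := fun hcon => hi₀hits (hcon ▸ Set.mem_univ i₀)
    have h := Set.ncard_lt_ncard (Set.ssubset_univ_iff.mpr hne) Set.finite_univ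
    rwa [Set.ncard_univ, Nat.card_eq_fintype_card, Fintype.card_fin] at h
  have hcB : ∀ (T : Set (Sym2 V)), T.ncard ≤ B := by
    intro T
    have h := Set.ncard_le_ncard (Set.subset_univ T) Set.finite_univ
    rwa [Set.ncard_univ, Nat.card_eq_fintype_card] at h
  -- apply the inductive hypothesis to the new system
  have happly : (k - hits'.ncard) * (B + 1) + (EQ' \ EP).ncard < N → _ := fun hlt =>
    ih ((k - hits'.ncard) * (B + 1) + (EQ' \ EP).ncard) hlt e' Q' hinj' heA' hQp' hQi' hQA'
      (le_refl _)
  by_cases hfan : ∃ i, e j = a i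
  · -- the rerouted path previously ended at a fan vertex; edge count decreases
    obtain ⟨istar, hstar⟩ := hfan
    have hxu : x ≠ u := fun hc => hjfan hc istar hstar
    have histar : istar ∈ hits := ⟨j, hstar⟩
    -- hits does not decrease
    have hsub : insert i₀ (hits \ {istar}) ⊆ hits' := by
      rintro i (rfl | ⟨⟨l, hl⟩, hine⟩)
      · exact ⟨j, he'j⟩
      · have hlj : l ≠ j := by
          intro hc
          subst hc
          have h2 : a i = a istar := hl.symm.trans hstar
          exact hine (hainj h2)
        exact ⟨l, (he'ne l hlj).trans hl⟩
    have h1 : hits.ncard ≤ hits'.ncard := by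
      have h2 : (hits \ {istar}).ncard + 1 = hits.ncard :=
        Set.ncard_diff_singleton_add_one histar (Set.toFinite _)
      have h3 : (insert i₀ (hits \ {istar})).ncard = (hits \ {istar}).ncard + 1 :=
        Set.ncard_insert_of_notMem (fun h => hi₀hits h.1) (Set.toFinite _)
      calc hits.ncard = (insert i₀ (hits \ {istar})).ncard := by rw [h3, h2]
        _ ≤ hits'.ncard := Set.ncard_le_ncard hsub (Set.toFinite _)
    -- edge count decreases strictly
    have hEQ'sub : EQ' ⊆ EQ ∪ EP := by
      intro d hd
      rw [hEQ'def, Set.mem_iUnion] at hd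
      obtain ⟨l, hl⟩ := hd
      simp only [Set.mem_setOf_eq] at hl
      by_cases h1 : l = j
      · subst h1
        rw [hQ'jedg, hRdef, Walk.edges_append, List.mem_append] at hl
        rcases hl with hl | hl
        · exact Or.inl (Set.mem_iUnion.mpr ⟨l, (Q l).edges_takeUntil_subset hxQj hl⟩)
        · exact Or.inr (Set.mem_iUnion.mpr ⟨i₀, hw2edges d hl⟩)
      · rw [hQ'nedg l h1] at hl
        exact Or.inl (Set.mem_iUnion.mpr ⟨l, hl⟩)
    have hwitness : ∃ v w : V, s(v, w) ∈ post.edges ∧ s(v, w) ∉ EP := by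
      by_contra hcon
      push_neg at hcon
      have hALL : ∀ d ∈ post.edges, ∃ i, d ∈ (P i).edges := by
        intro d hd
        revert hd
        induction d using Sym2.ind with
        | _ v w =>
          intro hd
          have h2 := hcon v w hd
          rw [hEPdef, Set.mem_iUnion] at h2
          exact h2
      have hend : e j ∈ (P i₀).support := by
        refine fan_trace hPi i₀ post hALL hxP ?_
        intro v hv
        refine ⟨fun hc => hu_not_post hxu (hc ▸ hv), fun hc => ha₀S (hc ▸ hpostS v hv)⟩
      have h2 := hPA i₀ (e j) hend (heA j)
      exact hi₀ j h2
    obtain ⟨vv, ww, hdpost, hdEP⟩ := hwitness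
    have hdQ : s(vv, ww) ∈ EQ :=
      Set.mem_iUnion.mpr ⟨j, (Q j).edges_dropUntil_subset hxQj hdpost⟩
    have hvpost : vv ∈ post.support := post.fst_mem_support_of_mem_edges hdpost
    have hwpost : ww ∈ post.support := post.snd_mem_support_of_mem_edges hdpost
    have hdnotE' : s(vv, ww) ∉ EQ' := by
      intro hmem
      rw [hEQ'def, Set.mem_iUnion] at hmem
      obtain ⟨l, hl⟩ := hmem
      simp only [Set.mem_setOf_eq] at hl
      by_cases h1 : l = j
      · subst h1
        rw [hQ'jedg, hRdef, Walk.edges_append, List.mem_append] at hl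
        rcases hl with hl | hl
        · have hnd : ((Q l).edges).Nodup := (hQp l).isTrail.edges_nodup
          rw [← hspec, Walk.edges_append, List.nodup_append] at hnd
          exact hnd.2.2 _ hl _ hdpost rfl
        · exact hdEP (Set.mem_iUnion.mpr ⟨i₀, hw2edges _ hl⟩)
      · rw [hQ'nedg l h1] at hl
        have hvu : vv ≠ u := fun hc => hu_not_post hxu (hc ▸ hvpost)
        have hwu : ww ≠ u := fun hc => hu_not_post hxu (hc ▸ hwpost)
        have hadj : G.Adj vv ww := (Q l).edges_subset_edgeSet hl
        by_cases hv : vv = e j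
        · have hwej : ww ≠ e j := fun hc => hadj.ne (hv.trans hc.symm)
          exact hQi j l (Ne.symm h1) ww (hpostsub ww hwpost) hwu hwej
            ((Q l).snd_mem_support_of_mem_edges hl)
        · exact hQi j l (Ne.symm h1) vv (hpostsub vv hvpost) hvu hv
            ((Q l).fst_mem_support_of_mem_edges hl)
    have hss : EQ' \ EP ⊂ EQ \ EP := by
      rw [Set.ssubset_iff_of_subset]
      · exact ⟨s(vv, ww), ⟨hdQ, hdEP⟩, fun hc => hdnotE' hc.1⟩
      · intro d hd
        rcases hEQ'sub hd.1 with h | h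
        · exact ⟨h, hd.2⟩
        · exact absurd h hd.2
    have hclt : (EQ' \ EP).ncard < (EQ \ EP).ncard :=
      Set.ncard_lt_ncard hss (Set.toFinite _)
    refine happly ?_
    have harith : (k - hits'.ncard) * (B + 1) + (EQ' \ EP).ncard <
        (k - hits.ncard) * (B + 1) + (EQ \ EP).ncard := by
      have h2 : k - hits'.ncard ≤ k - hits.ncard := Nat.sub_le_sub_left h1 k
      have h3 : (k - hits'.ncard) * (B + 1) ≤ (k - hits.ncard) * (B + 1) :=
        Nat.mul_le_mul_right _ h2
      omega
    exact lt_of_lt_of_le harith hM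
  · -- the rerouted path previously did not end at a fan vertex; hits increases
    have hsub : insert i₀ hits ⊆ hits' := by
      rintro i (rfl | ⟨l, hl⟩)
      · exact ⟨j, he'j⟩
      · have hlj : l ≠ j := fun hc => hfan ⟨i, hc ▸ hl⟩
        exact ⟨l, (he'ne l hlj).trans hl⟩
    have h1 : hits.ncard + 1 ≤ hits'.ncard := by
      have h2 : (insert i₀ hits).ncard = hits.ncard + 1 :=
        Set.ncard_insert_of_notMem hi₀hits (Set.toFinite _)
      calc hits.ncard + 1 = (insert i₀ hits).ncard := h2.symm
        _ ≤ hits'.ncard := Set.ncard_le_ncard hsub (Set.toFinite _)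
    refine happly ?_
    have harith : (k - hits'.ncard) * (B + 1) + (EQ' \ EP).ncard <
        (k - hits.ncard) * (B + 1) + (EQ \ EP).ncard := by
      have h2 : k - hits'.ncard ≤ k - hits.ncard - 1 := by omega
      have hc' : (EQ' \ EP).ncard ≤ B := hcB _
      have h4 : 1 ≤ k - hits.ncard := by omega
      have h3 : (k - hits'.ncard) * (B + 1) ≤ (k - hits.ncard - 1) * (B + 1) :=
        Nat.mul_le_mul_right _ h2
      have h5 : (k - hits.ncard - 1) * (B + 1) + (B + 1) = (k - hits.ncard) * (B + 1) := by
        have : k - hits.ncard - 1 + 1 = k - hits.ncard := by omega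
        calc (k - hits.ncard - 1) * (B + 1) + (B + 1) = (k - hits.ncard - 1 + 1) * (B + 1) := by
              ring
          _ = (k - hits.ncard) * (B + 1) := by rw [this]
      omega
    exact lt_of_lt_of_le harith hM

end PerfectAux

/-- **Perfect's theorem on independent paths.** Let `u ∈ V(G)` and
`A ⊆ V(G − u)`. Suppose there are `k` independent paths from `u` to distinct
vertices `a 0, …, a (k-1)` of `A`, otherwise disjoint from `A`. Then for any
`n ≥ k`, if there exist `n` independent paths in `G` from `u` to `n` distinct
vertices of `A`, otherwise disjoint from `A`, then such a family may be chosen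
so that `a i` lies on the `i`-th path for each `i < k`. -/
theorem statement7 {V : Type*} [Fintype V] (G : SimpleGraph V)
    (u : V) (A : Set V) (hu : u ∉ A)
    (k n : ℕ) (hkn : k ≤ n)
    (a : Fin k → V) (hainj : Function.Injective a) (haA : ∀ i, a i ∈ A)
    (hk : ∃ P : ∀ i : Fin k, G.Walk u (a i),
      (∀ i, (P i).IsPath) ∧
      (∀ i j, i ≠ j → ∀ v, v ∈ (P i).support → v ≠ u → v ≠ a i → v ∉ (P j).support) ∧
      (∀ i, ∀ v ∈ (P i).support, v ∈ A → v = a i))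
    (hn : ∃ (e : Fin n → V) (Q : ∀ i : Fin n, G.Walk u (e i)),
      Function.Injective e ∧ (∀ i, e i ∈ A) ∧ (∀ i, (Q i).IsPath) ∧
      (∀ i j, i ≠ j → ∀ v, v ∈ (Q i).support → v ≠ u → v ≠ e i → v ∉ (Q j).support) ∧
      (∀ i, ∀ v ∈ (Q i).support, v ∈ A → v = e i)) :
    ∃ (e : Fin n → V) (Q : ∀ i : Fin n, G.Walk u (e i)),
      Function.Injective e ∧ (∀ i, e i ∈ A) ∧ (∀ i, (Q i).IsPath) ∧
      (∀ i j, i ≠ j → ∀ v, v ∈ (Q i).support → v ≠ u → v ≠ e i → v ∉ (Q j).support) ∧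
      (∀ i, ∀ v ∈ (Q i).support, v ∈ A → v = e i) ∧
      (∀ i : Fin k, a i ∈ (Q (Fin.castLE hkn i)).support) := by
  classical
  obtain ⟨P, hPp, hPi, hPA⟩ := hk
  obtain ⟨e0, Q0, h0inj, h0A, h0p, h0i, h0A2⟩ := hn
  obtain ⟨e1, Q1, h1inj, h1A, h1p, h1i, h1A2, h1fan⟩ :=
    perfect_main G u A hu k n hkn a hainj haA P hPp hPi hPA
      ((k - {i : Fin k | ∃ l, e0 l = a i}.ncard) * (Fintype.card (Sym2 V) + 1) +
        ((⋃ l, {d | d ∈ (Q0 l).edges}) \ (⋃ i, {d | d ∈ (P i).edges})).ncard)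
      e0 Q0 h0inj h0A h0p h0i h0A2 (le_refl _)
  choose τ hτ using h1fan
  have hτinj : Function.Injective τ := fun i1 i2 h => hainj (by rw [← hτ i1, ← hτ i2, h])
  obtain ⟨σ, hσ⟩ := exists_perm_extend hkn τ hτinj
  refine ⟨fun l => e1 (σ l), fun l => Q1 (σ l), ?_, fun l => h1A (σ l),
    fun l => h1p (σ l), ?_, fun l => h1A2 (σ l), ?_⟩
  · exact fun l1 l2 h => σ.injective (h1inj h)
  · intro i j hne v hv hvu hve
    exact h1i (σ i) (σ j) (fun hc => hne (σ.injective hc)) v hv hvu hve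
  · intro i
    have h2 : e1 (σ (Fin.castLE hkn i)) = a i := by rw [hσ i]; exact hτ i
    rw [← h2]
    exact Walk.end_mem_support (Q1 (σ (Fin.castLE hkn i)))
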